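/- Let h(z) = exp(-(1+z)/(1-z)) on 𝔻. Then u₂(z) = log(|h'(z)| / ((1-|h(z)|²)|h(z)|)) is a C² solution on 𝔻 of Δu = 4|h(z)|² e^{2u}, and u₂ is not identically equal to u₁(z) = log(1/((1-|z|²)|h(z)|)). In particular the boundary value problem Δu = 4|h|² e^{2u} in 𝔻 with u = +∞ on ∂𝔻 admits more than one solution. -/

import Mathlib

open Complex

/-- Euclidean Laplacian of a real-valued function on `ℂ`. -/
noncomputable def lap (u : ℂ → ℝ) (z : ℂ) : ℝ :=
  fderiv ℝ (fun w => fderiv ℝ u w 1) z 1 + fderiv ℝ (fun w => fderiv ℝ u w Complex.I) z Complex.I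

theorem lap_congr' {u v : ℂ → ℝ} {z : ℂ} (huv : u =ᶠ[nhds z] v) : lap u z = lap v z := by
  have hfd := huv.fderiv (𝕜 := ℝ)
  have h1 : (fun w => fderiv ℝ u w 1) =ᶠ[nhds z] (fun w => fderiv ℝ v w 1) :=
    hfd.mono fun w hw => by simp only [hw]
  have hI : (fun w => fderiv ℝ u w I) =ᶠ[nhds z] (fun w => fderiv ℝ v w I) :=
    hfd.mono fun w hw => by simp only [hw]
  unfold lap
  rw [h1.fderiv_eq, hI.fderiv_eq]

theorem lap_comb' {F G : ℂ → ℝ} {z : ℂ} (hF : ContDiffAt ℝ 2 F z) (hG : ContDiffAt ℝ 2 G z)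
    (r a b : ℝ) :
    lap (fun w => r + a * F w + b * G w) z = a * lap F z + b * lap G z := by
  have hFe : ∀ᶠ w in nhds z, DifferentiableAt ℝ F w :=
    (hF.eventually (by norm_num)).mono fun w hw => hw.differentiableAt (by norm_num)
  have hGe : ∀ᶠ w in nhds z, DifferentiableAt ℝ G w :=
    (hG.eventually (by norm_num)).mono fun w hw => hw.differentiableAt (by norm_num)
  have ev : ∀ v : ℂ, (fun w => fderiv ℝ (fun w => r + a * F w + b * G w) w v) =ᶠ[nhds z]
      (fun w => a * fderiv ℝ F w v + b * fderiv ℝ G w v) := by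
    intro v
    filter_upwards [hFe, hGe] with w hFw hGw
    have : HasFDerivAt (fun w => r + a * F w + b * G w)
        ((a • fderiv ℝ F w + b • fderiv ℝ G w)) w := by
      have h1 := (hFw.hasFDerivAt.const_mul a).add (hGw.hasFDerivAt.const_mul b)
      have h2 := h1.const_add r
      convert h2 using 2 with x
      exacts [rfl, rfl, rfl, by simp only [Pi.add_apply]; ring]
    rw [this.fderiv]
    simp
  have hFd : ∀ v : ℂ, DifferentiableAt ℝ (fun w => fderiv ℝ F w v) z := fun v =>
    ((hF.fderiv_right (m := 1) (by norm_num)).differentiableAt (by norm_num)).clm_apply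
      (differentiableAt_const v)
  have hGd : ∀ v : ℂ, DifferentiableAt ℝ (fun w => fderiv ℝ G w v) z := fun v =>
    ((hG.fderiv_right (m := 1) (by norm_num)).differentiableAt (by norm_num)).clm_apply
      (differentiableAt_const v)
  unfold lap
  rw [(ev 1).fderiv_eq, (ev I).fderiv_eq]
  rw [fderiv_fun_add ((hFd 1).const_mul a) ((hGd 1).const_mul b),
      fderiv_fun_add ((hFd I).const_mul a) ((hGd I).const_mul b),
      fderiv_const_mul (hFd 1) a, fderiv_const_mul (hGd 1) b,
      fderiv_const_mul (hFd I) a, fderiv_const_mul (hGd I) b]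
  simp
  ring

theorem lap_log_master {f : ℂ → ℂ} {s : Set ℂ} (hs : IsOpen s) (hf : DifferentiableOn ℂ f s)
    (c : ℝ) (hne : ∀ w ∈ s, c - Complex.normSq (f w) ≠ 0) {z : ℂ} (hz : z ∈ s) :
    lap (fun x => Real.log (c - Complex.normSq (f x))) z
      = -4 * c * Complex.normSq (deriv f z) / (c - Complex.normSq (f z))^2 := by
  unfold lap
  have han : AnalyticOnNhd ℂ f s := hf.analyticOnNhd hs
  have hd1 : ∀ w ∈ s, HasDerivAt f (deriv f w) w := fun w hw =>
    ((han w hw).differentiableAt).hasDerivAt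
  have hd2 : ∀ w ∈ s, HasDerivAt (deriv f) (deriv (deriv f) w) w := fun w hw =>
    ((han.deriv w hw).differentiableAt).hasDerivAt
  have hden : ∀ w ∈ s, HasFDerivAt (fun x => c - Complex.normSq (f x))
      (-(Complex.reCLM.comp
        (f w • ((Complex.conjCLE : ℂ →L[ℝ] ℂ).comp (deriv f w • (1 : ℂ →L[ℝ] ℂ)))
          + (starRingEnd ℂ) (f w) • (deriv f w • (1 : ℂ →L[ℝ] ℂ))))) w := by
    intro w hw
    have hfw : HasFDerivAt f (deriv f w • (1 : ℂ →L[ℝ] ℂ)) w := (hd1 w hw).complexToReal_fderiv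
    have hconj : HasFDerivAt (fun x => (starRingEnd ℂ) (f x))
        ((Complex.conjCLE : ℂ →L[ℝ] ℂ).comp (deriv f w • (1 : ℂ →L[ℝ] ℂ))) w := by
      simpa only [Function.comp_def, Complex.conjCLE_apply]
        using (Complex.conjCLE.hasFDerivAt).comp w hfw
    have hprod := hfw.mul hconj
    have hre := (Complex.reCLM.hasFDerivAt).comp w hprod
    have := hre.const_sub c
    simpa only [Function.comp_def, Pi.mul_apply, Complex.reCLM_apply, Complex.mul_conj, Complex.ofReal_re]
      using this
  set g : ℂ → ℂ → ℝ := fun v w =>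
    (c - Complex.normSq (f w))⁻¹ * (-((f w * ((starRingEnd ℂ) (deriv f w * v)) +
        ((starRingEnd ℂ) (f w)) * (deriv f w * v)).re)) with hg_def
  have key : ∀ v : ℂ, ∀ w ∈ s,
      fderiv ℝ (fun x => Real.log (c - Complex.normSq (f x))) w v = g v w := by
    intro v w hw
    have hW := (hden w hw).log (hne w hw)
    rw [hW.fderiv]
    simp only [hg_def, ContinuousLinearMap.smul_apply, ContinuousLinearMap.neg_apply,
      ContinuousLinearMap.coe_comp', Function.comp_apply, ContinuousLinearMap.add_apply,
      ContinuousLinearMap.one_apply, smul_eq_mul,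
      Complex.reCLM_apply, ContinuousLinearEquiv.coe_coe, Complex.conjCLE_apply]
  have ev : ∀ v : ℂ, (fun w => fderiv ℝ (fun x => Real.log (c - Complex.normSq (f x))) w v)
      =ᶠ[nhds z] g v := fun v =>
    Filter.eventuallyEq_of_mem (hs.mem_nhds hz) (fun w hw => key v w hw)
  rw [(ev 1).fderiv_eq, (ev I).fderiv_eq]
  have hfz : HasFDerivAt f (deriv f z • (1 : ℂ →L[ℝ] ℂ)) z := (hd1 z hz).complexToReal_fderiv
  have hconjf : HasFDerivAt (fun x => (starRingEnd ℂ) (f x))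
      ((Complex.conjCLE : ℂ →L[ℝ] ℂ).comp (deriv f z • (1 : ℂ →L[ℝ] ℂ))) z := by
    simpa only [Function.comp_def, Complex.conjCLE_apply]
      using (Complex.conjCLE.hasFDerivAt).comp z hfz
  have hinv : HasFDerivAt (fun x => (c - Complex.normSq (f x))⁻¹)
      ((-(ContinuousLinearMap.mulLeftRight ℝ ℝ (c - Complex.normSq (f z))⁻¹
          (c - Complex.normSq (f z))⁻¹)).comp
        (-(Complex.reCLM.comp
          (f z • ((Complex.conjCLE : ℂ →L[ℝ] ℂ).comp (deriv f z • (1 : ℂ →L[ℝ] ℂ)))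
            + (starRingEnd ℂ) (f z) • (deriv f z • (1 : ℂ →L[ℝ] ℂ)))))) z := by
    simpa only [Function.comp_def]
      using (hasFDerivAt_inv' (𝕜 := ℝ) (hne z hz)).comp z (hden z hz)
  set E : ℂ → ℝ := fun v =>
    -2 * (c - Complex.normSq (f z))⁻¹ * ((f z).re * (deriv (deriv f) z * v * v).re
        + (f z).im * (deriv (deriv f) z * v * v).im + Complex.normSq (deriv f z * v))
      - 4 * ((c - Complex.normSq (f z))⁻¹)^2 * ((f z).re * (deriv f z * v).re
        + (f z).im * (deriv f z * v).im)^2 with hE_def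
  have chain : ∀ v : ℂ, ∃ D : ℂ →L[ℝ] ℝ, HasFDerivAt (g v) D z ∧ D v = E v := by
    intro v
    have hf1v : HasFDerivAt (fun w => deriv f w * v) ((deriv (deriv f) z * v) • (1 : ℂ →L[ℝ] ℂ)) z :=
      ((hd2 z hz).mul_const v).complexToReal_fderiv
    have hconj1 : HasFDerivAt (fun w => (starRingEnd ℂ) (deriv f w * v))
        ((Complex.conjCLE : ℂ →L[ℝ] ℂ).comp ((deriv (deriv f) z * v) • (1 : ℂ →L[ℝ] ℂ))) z := by
      simpa only [Function.comp_def, Complex.conjCLE_apply]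
        using (Complex.conjCLE.hasFDerivAt).comp z hf1v
    have hm1 := hfz.mul hconj1
    have hm2 := hconjf.mul hf1v
    have hsum := hm1.add hm2
    have hre := (Complex.reCLM.hasFDerivAt).comp z hsum
    have hnum := hre.neg
    have hq := hinv.mul hnum
    refine ⟨_, hq.congr_of_eventuallyEq (Filter.Eventually.of_forall fun w => ?_), ?_⟩
    · simp only [hg_def, Function.comp_def, Complex.reCLM_apply, Pi.mul_apply, Pi.add_apply, Pi.neg_apply]
    · simp only [hE_def, ContinuousLinearMap.add_apply, ContinuousLinearMap.smul_apply,
        ContinuousLinearMap.neg_apply, ContinuousLinearMap.coe_comp', Function.comp_apply,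
        ContinuousLinearMap.one_apply, smul_eq_mul, Complex.reCLM_apply,
        ContinuousLinearEquiv.coe_coe, Complex.conjCLE_apply,
        ContinuousLinearMap.mulLeftRight_apply, Pi.mul_apply, Pi.add_apply, Pi.neg_apply,
        Complex.add_re, Complex.mul_re, Complex.mul_im, Complex.conj_re, Complex.conj_im,
        Complex.normSq_apply]
      ring
  obtain ⟨D1, hD1, hv1⟩ := chain 1
  obtain ⟨DI, hDI, hvI⟩ := chain I
  rw [hD1.fderiv, hDI.fderiv, hv1, hvI]
  have hPne := hne z hz
  simp only [hE_def, Complex.normSq_apply, Complex.mul_re, Complex.mul_im,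
    Complex.I_re, Complex.I_im, Complex.one_re, Complex.one_im]
  simp only [Complex.normSq_apply] at hPne
  field_simp [hPne]
  ring

theorem contDiff_normSq' : ContDiff ℝ 2 Complex.normSq := by
  have : Complex.normSq = fun z : ℂ => z.re * z.re + z.im * z.im := by
    funext z; exact Complex.normSq_apply z
  rw [this]
  exact (Complex.reCLM.contDiff.mul Complex.reCLM.contDiff).add
    (Complex.imCLM.contDiff.mul Complex.imCLM.contDiff)

/-- For the atomic singular inner function `h(z) = exp(-(1+z)/(1-z))` on the unit disk,
`u₂(z) = log (|h'(z)|/((1-|h(z)|²)|h(z)|))` is a C² solution of `Δu = 4|h|² e^{2u}` on `𝔻`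
which is not identically equal to `u₁(z) = log (1/((1-|z|²)|h(z)|))`; hence the boundary
value problem `Δu = 4|h|²e^{2u}`, `u = +∞` on `∂𝔻`, has more than one solution. -/
theorem singular_inner_solution_two
    (h : ℂ → ℂ) (hdef : ∀ z, h z = Complex.exp (-(1 + z) / (1 - z)))
    (u₁ u₂ : ℂ → ℝ)
    (hu₁ : ∀ z, u₁ z = Real.log (1 / ((1 - (‖z‖)^2) * ‖h z‖)))
    (hu₂ : ∀ z, u₂ z = Real.log (‖deriv h z‖ /
        ((1 - (‖h z‖)^2) * ‖h z‖))) :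
    ContDiffOn ℝ 2 u₂ (Metric.ball (0:ℂ) 1) ∧
    (∀ z ∈ Metric.ball (0:ℂ) 1,
      lap u₂ z = 4 * (‖h z‖)^2 * Real.exp (2 * u₂ z)) ∧
    ¬ (∀ z ∈ Metric.ball (0:ℂ) 1, u₂ z = u₁ z) := by
  set s : Set ℂ := Metric.ball (0:ℂ) 1 with hs_def
  have hs : IsOpen s := Metric.isOpen_ball
  have habslt : ∀ w ∈ s, ‖w‖ < 1 := by
    intro w hw
    simpa [hs_def, Complex.dist_eq] using hw
  have h1ne : ∀ w ∈ s, (1 : ℂ) - w ≠ 0 := by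
    intro w hw hcon
    have hw1 : ‖w‖ < 1 := habslt w hw
    have : w = 1 := by linear_combination -hcon
    rw [this] at hw1
    simp at hw1
  -- derivative of h
  have hG : ∀ w ∈ s, HasDerivAt (fun x => -(1+x)/(1-x)) (-2/(1-w)^2) w := by
    intro w hw
    have hnum : HasDerivAt (fun x : ℂ => -(1+x)) (-1) w := (((hasDerivAt_id w).const_add 1).neg)
    have hden : HasDerivAt (fun x : ℂ => 1-x) (-1) w := (hasDerivAt_id w).const_sub 1
    have := hnum.div hden (h1ne w hw)
    convert this using 1
    have := h1ne w hw
    exacts [rfl, rfl, rfl, by ring]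
  have hh : ∀ w ∈ s, HasDerivAt h (Complex.exp (-(1+w)/(1-w)) * (-2/(1-w)^2)) w := by
    intro w hw
    exact ((hG w hw).cexp).congr_of_eventuallyEq
      (Filter.Eventually.of_forall fun x => hdef x)
  have hdiff : DifferentiableOn ℂ h s := fun w hw =>
    ((hh w hw).differentiableAt).differentiableWithinAt
  have hderiv_eq : ∀ w ∈ s, deriv h w = Complex.exp (-(1+w)/(1-w)) * (-2/(1-w)^2) :=
    fun w hw => (hh w hw).deriv
  -- modulus facts
  have habs : ∀ w, ‖h w‖ = Real.exp ((-(1+w)/(1-w)).re) := by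
    intro w; rw [hdef w]; exact Complex.norm_exp _
  have hre : ∀ w ∈ s, ((-(1+w))/(1-w)).re = (Complex.normSq w - 1)/Complex.normSq (1-w) := by
    intro w hw
    rw [Complex.div_re, ← add_div]
    congr 1
    simp only [Complex.normSq_apply, Complex.neg_re, Complex.neg_im, Complex.add_re,
      Complex.add_im, Complex.one_re, Complex.one_im, Complex.sub_re, Complex.sub_im]
    ring
  have hnspos : ∀ w ∈ s, 0 < Complex.normSq (1 - w) := fun w hw =>
    Complex.normSq_pos.mpr (h1ne w hw)
  have habs1 : ∀ w ∈ s, ‖h w‖ < 1 := by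
    intro w hw
    rw [habs w]
    rw [Real.exp_lt_one_iff, hre w hw]
    apply div_neg_of_neg_of_pos _ (hnspos w hw)
    have := habslt w hw
    have h2 : Complex.normSq w < 1 := by
      rw [← Complex.sq_norm]
      nlinarith [norm_nonneg w]
    linarith
  have habspos : ∀ w, 0 < ‖h w‖ := by
    intro w; rw [habs w]; exact Real.exp_pos _
  have hnslt : ∀ w ∈ s, Complex.normSq (h w) < 1 := by
    intro w hw
    rw [← Complex.sq_norm]
    nlinarith [habspos w, habs1 w hw]
  have hnsh_pos : ∀ w ∈ s, (0:ℝ) < 1 - Complex.normSq (h w) := fun w hw => by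
    linarith [hnslt w hw]
  -- |h'| formula
  have habsderiv : ∀ w ∈ s,
      ‖deriv h w‖ = ‖h w‖ * (2 / Complex.normSq (1-w)) := by
    intro w hw
    rw [hderiv_eq w hw, ← hdef w, norm_mul, norm_div, norm_neg, norm_pow]
    rw [Complex.sq_norm]
    norm_num
  -- rewriting u₂
  have hu2eq : ∀ w ∈ s, u₂ w = Real.log 2
      + (-1) * Real.log ((0:ℝ) - Complex.normSq (1 - w))
      + (-1) * Real.log (1 - Complex.normSq (h w)) := by
    intro w hw
    rw [hu₂ w]
    have harg : ‖deriv h w‖ / ((1 - (‖h w‖)^2) * ‖h w‖)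
        = 2 / (Complex.normSq (1-w) * (1 - Complex.normSq (h w))) := by
      rw [habsderiv w hw, Complex.sq_norm]
      have h1 := habspos w
      have h2 := hnspos w hw
      have h3 := hnsh_pos w hw
      field_simp
    rw [harg, Real.log_div two_ne_zero (by have := hnspos w hw; have := hnsh_pos w hw; positivity),
        Real.log_mul (ne_of_gt (hnspos w hw)) (ne_of_gt (hnsh_pos w hw)),
        zero_sub, Real.log_neg_eq_log]
    ring
  -- smoothness
  have hnsq : ContDiff ℝ 2 Complex.normSq := contDiff_normSq'
  have hW1smooth : ContDiffOn ℝ 2 (fun w => Real.log ((0:ℝ) - Complex.normSq (1 - w))) s := by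
    apply ContDiffOn.log
    · exact (contDiffOn_const.sub
        (hnsq.comp_contDiffOn (contDiffOn_const.sub contDiffOn_id)))
    · intro w hw
      have := hnspos w hw
      intro hcon
      rw [zero_sub, neg_eq_zero] at hcon
      linarith [hcon ▸ this]
  have hW2smooth : ContDiffOn ℝ 2 (fun w => Real.log (1 - Complex.normSq (h w))) s := by
    apply ContDiffOn.log
    · exact (contDiffOn_const.sub
        (hnsq.comp_contDiffOn ((hdiff.contDiffOn hs).restrict_scalars ℝ)))
    · intro w hw
      exact ne_of_gt (hnsh_pos w hw)
  have husmooth : ContDiffOn ℝ 2 u₂ s :=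
    ContDiffOn.congr ((contDiffOn_const.add (contDiffOn_const.mul hW1smooth)).add
      (contDiffOn_const.mul hW2smooth)) hu2eq
  refine ⟨husmooth, ?_, ?_⟩
  · -- the PDE
    intro z hz
    have e1 : lap u₂ z = lap (fun w => Real.log 2
        + (-1) * Real.log ((0:ℝ) - Complex.normSq (1 - w))
        + (-1) * Real.log (1 - Complex.normSq (h w))) z :=
      lap_congr' (Filter.eventuallyEq_of_mem (hs.mem_nhds hz) (fun w hw => hu2eq w hw))
    have hW1cd : ContDiffAt ℝ 2 (fun w => Real.log ((0:ℝ) - Complex.normSq (1 - w))) z :=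
      (hW1smooth z hz).contDiffAt (hs.mem_nhds hz)
    have hW2cd : ContDiffAt ℝ 2 (fun w => Real.log (1 - Complex.normSq (h w))) z :=
      (hW2smooth z hz).contDiffAt (hs.mem_nhds hz)
    have e2 := lap_comb' hW1cd hW2cd (Real.log 2) (-1) (-1)
    have hm1 : lap (fun w => Real.log ((0:ℝ) - Complex.normSq (1 - w))) z = 0 := by
      have := lap_log_master (f := fun w => (1:ℂ) - w) hs
        ((differentiableOn_const (1:ℂ)).sub differentiableOn_id) 0
        (fun w hw => by simpa using (hnspos w hw).ne') hz
      simpa only [neg_mul, zero_mul, mul_zero, neg_zero, zero_div] using this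
    have hm2 : lap (fun w => Real.log (1 - Complex.normSq (h w))) z
        = -4 * Complex.normSq (deriv h z) / (1 - Complex.normSq (h z))^2 := by
      have := lap_log_master (f := h) hs hdiff 1
        (fun w hw => ne_of_gt (hnsh_pos w hw)) hz
      simpa only [mul_one] using this
    rw [e1, e2, hm1, hm2]
    -- now the right-hand side
    have ht : ‖deriv h z‖ / ((1 - (‖h z‖)^2) * ‖h z‖) > 0 := by
      have hd0 : ‖deriv h z‖ > 0 := by
        rw [habsderiv z hz]
        have := habspos z
        have := hnspos z hz
        positivity
      have := habspos z
      have h3 := hnsh_pos z hz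
      rw [← Complex.sq_norm] at h3
      positivity
    rw [hu₂ z]
    rw [show (2:ℝ) * Real.log (‖deriv h z‖ /
        ((1 - (‖h z‖)^2) * ‖h z‖))
      = Real.log (‖deriv h z‖ /
        ((1 - (‖h z‖)^2) * ‖h z‖)) +
        Real.log (‖deriv h z‖ /
        ((1 - (‖h z‖)^2) * ‖h z‖)) by ring]
    rw [Real.exp_add, Real.exp_log ht]
    have hsq : (‖deriv h z‖)^2 = Complex.normSq (deriv h z) := Complex.sq_norm _
    have hsq2 : (‖h z‖)^2 = Complex.normSq (h z) := Complex.sq_norm _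
    have h3 := hnsh_pos z hz
    have h4 := habspos z
    rw [← hsq, ← hsq2]
    have h5 : ‖h z‖ ≠ 0 := ne_of_gt h4
    have h6 : (1 : ℝ) - ‖h z‖^2 ≠ 0 := by rw [hsq2]; exact ne_of_gt h3
    field_simp
    ring
  · -- u₂ ≠ u₁
    intro hall
    have h0mem : (0:ℂ) ∈ s := by simp [hs_def]
    have := hall 0 h0mem
    rw [hu₂ 0, hu₁ 0] at this
    have hh0 : h 0 = Complex.exp (-1) := by
      rw [hdef 0]; norm_num
    have habs0 : ‖h 0‖ = Real.exp (-1) := by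
      rw [hh0, Complex.norm_exp]
      norm_num
    have hder0 : deriv h 0 = Complex.exp (-1) * (-2) := by
      rw [hderiv_eq 0 h0mem]
      norm_num
    have habsder0 : ‖deriv h 0‖ = 2 * Real.exp (-1) := by
      rw [hder0, norm_mul, Complex.norm_exp]
      norm_num
      ring
    rw [habs0, habsder0] at this
    norm_num at this
    have he1 : Real.exp (-1) > 0 := Real.exp_pos _
    have he2 : (1:ℝ) - Real.exp (-1) ^ 2 > 0 := by
      have h7 : Real.exp (-1) < 1 := Real.exp_lt_one_iff.mpr (by norm_num)
      nlinarith
    have hx : (2:ℝ) * Real.exp (-1) / ((1 - Real.exp (-1) ^ 2) * Real.exp (-1)) > 0 := by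
      positivity
    have heq := congrArg Real.exp this
    rw [Real.exp_log hx] at heq
    rw [Real.exp_neg] at heq
    have hgt : Real.exp 1 > 2.7182818283 := Real.exp_one_gt_d9
    have hpos : (0:ℝ) < Real.exp 1 := Real.exp_pos 1
    have hEinv : (0:ℝ) < (Real.exp 1)⁻¹ := by positivity
    have hne2 : (1:ℝ) - ((Real.exp 1)⁻¹) ^ 2 ≠ 0 := by
      rw [Real.exp_neg] at he2
      exact ne_of_gt he2
    field_simp at heq
    have h2E : Real.exp 2 = Real.exp 1 * Real.exp 1 := by
      rw [← Real.exp_add]; norm_num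
    rw [sq] at heq
    have hden : Real.exp 1 * Real.exp 1 - 1 ≠ 0 := by nlinarith
    rw [div_eq_iff hden] at heq
    have hq2 : Real.exp 1 * Real.exp 1 * (Real.exp 1 * Real.exp 1 - 2*Real.exp 1 - 1)
        = Real.exp 1 * Real.exp 1 * 0 := by linear_combination -(Real.exp 1 * Real.exp 1) * heq
    have key := mul_left_cancel₀ (ne_of_gt (mul_pos hpos hpos)) hq2
    nlinarith [key, hgt]
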